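/- Let P and Q be unit vectors in ℝ³. Then the maximum of ‖v − P‖² + ‖v − Q‖² over all unit vectors v ∈ ℝ³ equals 4 + √(16 − 4‖P − Q‖²). -/

import Mathlib

/-- Lemma: for unit vectors `P, Q` in `ℝ³`, the maximum of `‖v-P‖² + ‖v-Q‖²` over unit
vectors `v` equals `4 + √(16 - 4‖P-Q‖²)`. -/
theorem stmt11 (P Q : EuclideanSpace ℝ (Fin 3)) (hP : ‖P‖ = 1) (hQ : ‖Q‖ = 1) :
    IsGreatest
      {x : ℝ | ∃ v : EuclideanSpace ℝ (Fin 3), ‖v‖ = 1 ∧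
        x = ‖v - P‖ ^ 2 + ‖v - Q‖ ^ 2}
      (4 + Real.sqrt (16 - 4 * ‖P - Q‖ ^ 2)) := by
  have key : ∀ v : EuclideanSpace ℝ (Fin 3), ‖v‖ = 1 →
      ‖v - P‖ ^ 2 + ‖v - Q‖ ^ 2 = 4 - 2 * inner ℝ v (P + Q) := by
    intro v hv
    have h1 := @norm_sub_sq_real (EuclideanSpace ℝ (Fin 3)) _ _ v P
    have h2 := @norm_sub_sq_real (EuclideanSpace ℝ (Fin 3)) _ _ v Q
    have h3 : (inner ℝ v (P + Q) : ℝ) = inner ℝ v P + inner ℝ v Q := inner_add_right v P Q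
    rw [h1, h2, hv, hP, hQ, h3]; ring
  have hpar : ‖P - Q‖ ^ 2 + ‖P + Q‖ ^ 2 = 4 := by
    have h1 := @norm_sub_sq_real (EuclideanSpace ℝ (Fin 3)) _ _ P Q
    have h2 := @norm_add_sq_real (EuclideanSpace ℝ (Fin 3)) _ _ P Q
    rw [h1, h2, hP, hQ]; ring
  have hsqrt : Real.sqrt (16 - 4 * ‖P - Q‖ ^ 2) = 2 * ‖P + Q‖ := by
    have : 16 - 4 * ‖P - Q‖ ^ 2 = (2 * ‖P + Q‖) ^ 2 := by nlinarith [hpar]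
    rw [this, Real.sqrt_sq (by positivity)]
  rw [hsqrt]
  constructor
  · by_cases h0 : P + Q = 0
    · refine ⟨P, hP, ?_⟩
      rw [key P hP, h0]; simp
    · have hn : ‖P + Q‖ ≠ 0 := norm_ne_zero_iff.mpr h0
      refine ⟨-(‖P + Q‖⁻¹ • (P + Q)), ?_, ?_⟩
      · rw [norm_neg, norm_smul, norm_inv, norm_norm, inv_mul_cancel₀ hn]
      · rw [key _ (by rw [norm_neg, norm_smul, norm_inv, norm_norm, inv_mul_cancel₀ hn])]
        have : (inner ℝ (-(‖P + Q‖⁻¹ • (P + Q))) (P + Q) : ℝ) = -(‖P + Q‖⁻¹ * ‖P + Q‖ ^ 2) := by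
          rw [inner_neg_left, inner_smul_left, real_inner_self_eq_norm_sq]
          simp
        rw [this]
        field_simp
        ring
  · rintro x ⟨v, hv, rfl⟩
    rw [key v hv]
    have hcs : |(inner ℝ v (P + Q) : ℝ)| ≤ ‖v‖ * ‖P + Q‖ := abs_real_inner_le_norm v (P + Q)
    rw [hv, one_mul] at hcs
    have := neg_abs_le (inner ℝ v (P + Q) : ℝ)
    linarith
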